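/- arXiv:2306.00324 — 3 statements merged into one kernel-verified Lean document; each statement's English description precedes it below -/
import Mathlib

section
/- Let S, A be nonempty finite sets, let K, H be positive integers, and let W ≥ 0 be a real number. Let q : {1,...,K} × {1,...,H} × S × A → [0,1] and n : {1,...,K} × {1,...,H} × S × A → ℝ be functions such that for all k, h, s, a: n(k,h,s,a) > (1/2) · ∑_{j=1}^{k−1} q(j,h,s,a) − W. For each k, h define L_{k,h} = {(s,a) ∈ S × A : (1/4) · ∑_{j=1}^{k−1} q(j,h,s,a) ≥ W + 1}. Then ∑_{k=1}^{K} ∑_{h=1}^{H} ∑_{(s,a) ∈ L_{k,h}} q(k,h,s,a) / n(k,h,s,a) ≤ 4 · |S| · |A| · H · ln(4 + K). -/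
open Finset

lemma log_key_stmt14 (b v : ℝ) (hb : 0 < b) (hv : 0 ≤ v) :
    v / (b + v) ≤ Real.log (b + v) - Real.log b := by
  have hbv : 0 < b + v := by linarith
  have h := Real.log_le_sub_one_of_pos (show (0:ℝ) < b / (b + v) from div_pos hb hbv)
  rw [Real.log_div hb.ne' hbv.ne'] at h
  have h1 : b / (b + v) - 1 = -(v / (b + v)) := by field_simp; ring
  linarith

/-- Per-pair occupancy-over-count bound restricted to pairs in `L_{k,h}`:
if the visit counts satisfy `n(k,h,s,a) > (1/2)·∑_{j<k} q(j,h,s,a) − W`, then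
`∑_k ∑_h ∑_{(s,a) ∈ L_{k,h}} q(k,h,s,a)/n(k,h,s,a) ≤ 4·S·A·H·ln(4+K)`. -/
theorem stmt_14 (S A : Type*) [Fintype S] [Nonempty S] [Fintype A] [Nonempty A]
    (K H : ℕ) (hK : 0 < K) (hH : 0 < H) (W : ℝ) (hW : 0 ≤ W)
    (q n : ℕ → ℕ → S → A → ℝ)
    (hq : ∀ k < K, ∀ h < H, ∀ s a, 0 ≤ q k h s a ∧ q k h s a ≤ 1)
    (hn : ∀ k < K, ∀ h < H, ∀ s a,
      n k h s a > (1 / 2 : ℝ) * (∑ j ∈ Finset.range k, q j h s a) - W) :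
    ∑ k ∈ Finset.range K, ∑ h ∈ Finset.range H,
      ∑ p ∈ Finset.univ.filter
        (fun p : S × A => W + 1 ≤ (1 / 4 : ℝ) * ∑ j ∈ Finset.range k, q j h p.1 p.2),
        q k h p.1 p.2 / n k h p.1 p.2 ≤
      4 * (Fintype.card S : ℝ) * (Fintype.card A : ℝ) * (H : ℝ) * Real.log (4 + K) := by
  classical
  set F : ℕ → ℕ → S × A → ℝ := fun k h p =>
    if W + 1 ≤ (1 / 4 : ℝ) * ∑ j ∈ Finset.range k, q j h p.1 p.2 then
      q k h p.1 p.2 / n k h p.1 p.2 else 0 with hF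
  have hrw : ∀ k h, (∑ p ∈ Finset.univ.filter
        (fun p : S × A => W + 1 ≤ (1 / 4 : ℝ) * ∑ j ∈ Finset.range k, q j h p.1 p.2),
        q k h p.1 p.2 / n k h p.1 p.2) = ∑ p : S × A, F k h p := by
    intro k h
    rw [Finset.sum_filter]
  -- key per-(h,p) bound
  have key : ∀ h < H, ∀ p : S × A,
      ∑ k ∈ Finset.range K, F k h p ≤ 4 * Real.log (4 + K) := by
    intro h hh p
    set Q : ℕ → ℝ := fun k => ∑ j ∈ Finset.range k, q j h p.1 p.2 with hQdef
    have hQnn : ∀ k ≤ K, 0 ≤ Q k := by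
      intro k hk
      exact Finset.sum_nonneg fun j hj =>
        (hq j (lt_of_lt_of_le (Finset.mem_range.mp hj) hk) h hh p.1 p.2).1
    have hQle : ∀ k ≤ K, Q k ≤ k := by
      intro k hk
      calc Q k ≤ ∑ _j ∈ Finset.range k, (1:ℝ) :=
            Finset.sum_le_sum fun j hj =>
              (hq j (lt_of_lt_of_le (Finset.mem_range.mp hj) hk) h hh p.1 p.2).2
        _ = k := by simp
    have step : ∀ k < K, F k h p ≤
        4 * (Real.log (Q (k+1) + 3) - Real.log (Q k + 3)) := by
      intro k hk
      have hQk : 0 ≤ Q k := hQnn k hk.le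
      have hQsucc : Q (k+1) = Q k + q k h p.1 p.2 := Finset.sum_range_succ _ _
      have hq1 := (hq k hk h hh p.1 p.2).1
      have hq2 := (hq k hk h hh p.1 p.2).2
      by_cases hc : W + 1 ≤ (1 / 4 : ℝ) * ∑ j ∈ Finset.range k, q j h p.1 p.2
      · have hnk := hn k hk h hh p.1 p.2
        have hc' : W + 1 ≤ (1 / 4 : ℝ) * Q k := hc
        have hm : (0:ℝ) < (Q k + q k h p.1 p.2 + 3) / 4 := by linarith
        have hmn : (Q k + q k h p.1 p.2 + 3) / 4 ≤ n k h p.1 p.2 := by linarith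
        have h1 : q k h p.1 p.2 / n k h p.1 p.2 ≤
            q k h p.1 p.2 / ((Q k + q k h p.1 p.2 + 3) / 4) :=
          div_le_div_of_nonneg_left hq1 hm hmn
        have h2 : q k h p.1 p.2 / ((Q k + q k h p.1 p.2 + 3) / 4) =
            4 * (q k h p.1 p.2 / ((Q k + 3) + q k h p.1 p.2)) := by
          rw [div_div_eq_mul_div]
          ring_nf
        have h3 := log_key_stmt14 (Q k + 3) (q k h p.1 p.2) (by linarith) hq1
        have hFc : F k h p = q k h p.1 p.2 / n k h p.1 p.2 := by
          simp only [hF, if_pos hc]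
        rw [hFc, hQsucc]
        have : Q k + q k h p.1 p.2 + 3 = (Q k + 3) + q k h p.1 p.2 := by ring
        calc q k h p.1 p.2 / n k h p.1 p.2
            ≤ 4 * (q k h p.1 p.2 / ((Q k + 3) + q k h p.1 p.2)) := by
              rw [← h2]; exact h1
          _ ≤ 4 * (Real.log ((Q k + 3) + q k h p.1 p.2) - Real.log (Q k + 3)) := by
              linarith
          _ = 4 * (Real.log (Q k + q k h p.1 p.2 + 3) - Real.log (Q k + 3)) := by
              ring_nf
      · have hFc : F k h p = 0 := by simp only [hF, if_neg hc]
        rw [hFc]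
        have hlog : Real.log (Q k + 3) ≤ Real.log (Q (k+1) + 3) := by
          apply Real.log_le_log (by linarith)
          rw [hQsucc]; linarith
        linarith
    calc ∑ k ∈ Finset.range K, F k h p
        ≤ ∑ k ∈ Finset.range K,
            4 * (Real.log (Q (k+1) + 3) - Real.log (Q k + 3)) :=
          Finset.sum_le_sum fun k hk => step k (Finset.mem_range.mp hk)
      _ = 4 * (Real.log (Q K + 3) - Real.log (Q 0 + 3)) := by
          rw [← Finset.mul_sum, Finset.sum_range_sub (fun k => Real.log (Q k + 3))]
      _ ≤ 4 * Real.log (4 + K) := by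
          have h0 : Q 0 = 0 := by simp [hQdef]
          have h1 : Real.log 3 ≥ 0 := Real.log_nonneg (by norm_num)
          have h2 : Real.log (Q K + 3) ≤ Real.log (4 + K) := by
            have h4 := hQnn K le_rfl
            apply Real.log_le_log (by linarith)
            have := hQle K le_rfl
            linarith
          rw [h0]
          norm_num
          linarith
  -- assemble
  have hswap : ∑ k ∈ Finset.range K, ∑ h ∈ Finset.range H, ∑ p : S × A, F k h p
      = ∑ h ∈ Finset.range H, ∑ p : S × A, ∑ k ∈ Finset.range K, F k h p := by
    rw [Finset.sum_comm]
    exact Finset.sum_congr rfl fun h _ => Finset.sum_comm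
  calc ∑ k ∈ Finset.range K, ∑ h ∈ Finset.range H,
      ∑ p ∈ Finset.univ.filter
        (fun p : S × A => W + 1 ≤ (1 / 4 : ℝ) * ∑ j ∈ Finset.range k, q j h p.1 p.2),
        q k h p.1 p.2 / n k h p.1 p.2
      = ∑ h ∈ Finset.range H, ∑ p : S × A, ∑ k ∈ Finset.range K, F k h p := by
        rw [← hswap]
        exact Finset.sum_congr rfl fun k _ => Finset.sum_congr rfl fun h _ => hrw k h
    _ ≤ ∑ h ∈ Finset.range H, ∑ _p : S × A, 4 * Real.log (4 + K) := by
        refine Finset.sum_le_sum fun h hh => Finset.sum_le_sum fun p _ =>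
          key h (Finset.mem_range.mp hh) p
    _ = 4 * (Fintype.card S : ℝ) * (Fintype.card A : ℝ) * (H : ℝ) * Real.log (4 + K) := by
        simp [Finset.sum_const, Fintype.card_prod]
        ring
end

section
/- Let S, A be nonempty finite sets, let K, H be positive integers, and let W ≥ 0 be a real number. Let q : {1,...,K} × {1,...,H} × S × A → [0,1] satisfy ∑_{(s,a) ∈ S×A} q(k,h,s,a) = 1 for every k and h, and let n : {1,...,K} × {1,...,H} × S × A → ℝ satisfy, for all k, h, s, a: n(k,h,s,a) > (1/2) · ∑_{j=1}^{k−1} q(j,h,s,a) − W. Then ∑_{k=1}^{K} ∑_{h=1}^{H} ∑_{(s,a)} q(k,h,s,a) / √(max{n(k,h,s,a), 1}) ≤ 2H · √(|S| · |A| · K · ln(4 + K)) + |S| · |A| · H · (4W + 5). -/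
open Finset Real

private lemma cs_aux {ι : Type*} (s : Finset ι) (a b : ι → ℝ)
    (ha : ∀ i ∈ s, 0 ≤ a i) (hb : ∀ i ∈ s, 0 ≤ b i) :
    ∑ i ∈ s, Real.sqrt (a i) * Real.sqrt (b i) ≤
      Real.sqrt (∑ i ∈ s, a i) * Real.sqrt (∑ i ∈ s, b i) := by
  have h := Real.sum_mul_le_sqrt_mul_sqrt s (fun i => Real.sqrt (a i)) (fun i => Real.sqrt (b i))
  have h1 : ∑ i ∈ s, Real.sqrt (a i) ^ 2 = ∑ i ∈ s, a i :=
    Finset.sum_congr rfl fun i hi => Real.sq_sqrt (ha i hi)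
  have h2 : ∑ i ∈ s, Real.sqrt (b i) ^ 2 = ∑ i ∈ s, b i :=
    Finset.sum_congr rfl fun i hi => Real.sq_sqrt (hb i hi)
  rwa [h1, h2] at h

private lemma cs_one {ι : Type*} [Fintype ι] (a : ι → ℝ) (ha : ∀ i, 0 ≤ a i) :
    ∑ i, Real.sqrt (a i) ≤
      Real.sqrt (Fintype.card ι) * Real.sqrt (∑ i, a i) := by
  have h := cs_aux Finset.univ (fun _ => (1 : ℝ)) a (by norm_num) (fun i _ => ha i)
  simpa [Real.sqrt_one, Finset.card_univ] using h

private lemma aux_seq (K : ℕ) (W : ℝ) (hW : 0 ≤ W) (r m : ℕ → ℝ)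
    (hr0 : ∀ k < K, 0 ≤ r k) (hr1 : ∀ k < K, r k ≤ 1)
    (hm1 : ∀ k, 1 ≤ m k)
    (hm : ∀ k < K, (1 / 2 : ℝ) * (∑ j ∈ Finset.range k, r j) - W < m k) :
    ∑ k ∈ Finset.range K, r k / Real.sqrt (m k) ≤
      Real.sqrt (∑ j ∈ Finset.range K, r j) * Real.sqrt (4 * Real.log (4 + K)) +
        (4 * W + 5) := by
  classical
  set Q : ℕ → ℝ := fun k => ∑ j ∈ Finset.range k, r j with hQdef
  have hQsucc : ∀ k, Q (k + 1) = Q k + r k := fun k => Finset.sum_range_succ r k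
  have hQ0 : Q 0 = 0 := Finset.sum_range_zero r
  have hQmono : ∀ k < K, Q k ≤ Q (k + 1) := by
    intro k hk; rw [hQsucc]; linarith [hr0 k hk]
  have hQK : Q K ≤ (K : ℝ) := by
    calc Q K ≤ ∑ _j ∈ Finset.range K, (1 : ℝ) :=
          Finset.sum_le_sum (fun j hj => hr1 j (Finset.mem_range.mp hj))
      _ = K := by simp
  -- split into good (Q k > 4W+4) and bad parts
  have hsplit : ∑ k ∈ Finset.range K, r k / Real.sqrt (m k)
      = (∑ k ∈ Finset.range K, if 4 * W + 4 < Q k then r k / Real.sqrt (m k) else 0)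
      + (∑ k ∈ Finset.range K, if 4 * W + 4 < Q k then 0 else r k / Real.sqrt (m k)) := by
    rw [← Finset.sum_add_distrib]
    refine Finset.sum_congr rfl fun k _ => ?_
    split_ifs <;> simp
  -- bad part
  have hbad : (∑ k ∈ Finset.range K, if 4 * W + 4 < Q k then 0 else r k / Real.sqrt (m k))
      ≤ 4 * W + 5 := by
    have step1 : ∀ k ∈ Finset.range K,
        (if 4 * W + 4 < Q k then (0 : ℝ) else r k / Real.sqrt (m k))
          ≤ (if 4 * W + 4 < Q k then 0 else r k) := by
      intro k hk
      have hkK := Finset.mem_range.mp hk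
      split_ifs
      · exact le_rfl
      · exact div_le_self (hr0 k hkK) (Real.one_le_sqrt.mpr (hm1 k))
    refine le_trans (Finset.sum_le_sum step1) ?_
    have inv : ∀ k, k ≤ K →
        (∑ j ∈ Finset.range k, if 4 * W + 4 < Q j then (0 : ℝ) else r j) ≤ Q k ∧
        (∑ j ∈ Finset.range k, if 4 * W + 4 < Q j then (0 : ℝ) else r j) ≤ 4 * W + 5 := by
      intro k
      induction k with
      | zero => intro _; simp [hQ0]; linarith
      | succ k ih =>
        intro hk
        have hkK : k < K := hk
        obtain ⟨h1, h2⟩ := ih (Nat.le_of_succ_le hk)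
        rw [Finset.sum_range_succ]
        by_cases hg : 4 * W + 4 < Q k
        · rw [if_pos hg]
          constructor
          · rw [hQsucc]; linarith [hr0 k hkK]
          · linarith
        · rw [if_neg hg]
          push_neg at hg
          constructor
          · rw [hQsucc]; linarith
          · linarith [hr1 k hkK]
    exact (inv K le_rfl).2
  -- good part
  set g : ℕ → ℝ := fun k => if k < K ∧ 4 * W + 4 < Q k then r k else 0 with hgdef
  set u : ℕ → ℝ := fun k => if k < K ∧ 4 * W + 4 < Q k then r k / m k else 0 with hudef
  have hg0 : ∀ k, 0 ≤ g k := by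
    intro k; simp only [hgdef]; split_ifs with h
    · exact hr0 k h.1
    · exact le_rfl
  have hu0 : ∀ k, 0 ≤ u k := by
    intro k; simp only [hudef]; split_ifs with h
    · exact div_nonneg (hr0 k h.1) (by linarith [hm1 k])
    · exact le_rfl
  have hgood_eq : ∀ k ∈ Finset.range K,
      (if 4 * W + 4 < Q k then r k / Real.sqrt (m k) else 0)
        = Real.sqrt (g k) * Real.sqrt (u k) := by
    intro k hk
    have hkK := Finset.mem_range.mp hk
    by_cases hg : 4 * W + 4 < Q k
    · have hgk : g k = r k := by simp only [hgdef]; rw [if_pos ⟨hkK, hg⟩]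
      have huk : u k = r k / m k := by simp only [hudef]; rw [if_pos ⟨hkK, hg⟩]
      rw [if_pos hg, hgk, huk, ← Real.sqrt_mul (hr0 k hkK),
        show r k * (r k / m k) = r k ^ 2 / m k by ring,
        Real.sqrt_div (by positivity) (m k), Real.sqrt_sq (hr0 k hkK)]
    · have hgk : g k = 0 := by simp only [hgdef]; rw [if_neg (by tauto)]
      have huk : u k = 0 := by simp only [hudef]; rw [if_neg (by tauto)]
      rw [if_neg hg, hgk, huk]; simp
  have hgsum : ∑ k ∈ Finset.range K, g k ≤ Q K := by
    refine Finset.sum_le_sum fun k hk => ?_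
    have hkK := Finset.mem_range.mp hk
    simp only [hgdef]; split_ifs
    · exact le_rfl
    · exact hr0 k hkK
  -- telescoping log bound for ∑ u
  set R : ℕ → ℝ := fun k => max (Q k) 4 with hRdef
  have hRpos : ∀ k, (0 : ℝ) < R k := fun k =>
    lt_of_lt_of_le (by norm_num) (le_max_right _ _)
  have hterm : ∀ k ∈ Finset.range K,
      u k ≤ 4 * (Real.log (R (k + 1)) - Real.log (R k)) := by
    intro k hk
    have hkK := Finset.mem_range.mp hk
    have hRmono : R k ≤ R (k + 1) := max_le_max (hQmono k hkK) le_rfl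
    by_cases hg : 4 * W + 4 < Q k
    · have huk : u k = r k / m k := by simp only [hudef]; rw [if_pos ⟨hkK, hg⟩]
      have hQk4 : (4 : ℝ) ≤ Q k := by linarith
      have hRk : R k = Q k := max_eq_left hQk4
      have hRk1 : R (k + 1) = Q (k + 1) := max_eq_left (by rw [hQsucc]; linarith [hr0 k hkK])
      have hQkpos : (0 : ℝ) < Q k := by linarith
      have hQk1pos : (0 : ℝ) < Q (k + 1) := by rw [hQsucc]; linarith [hr0 k hkK]
      have hmk : Q (k + 1) / 4 ≤ m k := by
        have h := hm k hkK
        rw [hQsucc]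
        have := hr1 k hkK
        simp only [hQdef] at *
        linarith
      have hmpos : (0 : ℝ) < m k := lt_of_lt_of_le one_pos (hm1 k)
      have h1 : r k / m k ≤ 4 * (r k / Q (k + 1)) := by
        calc r k / m k ≤ r k / (Q (k + 1) / 4) := by
              apply div_le_div_of_nonneg_left (hr0 k hkK) (by linarith) hmk
          _ = 4 * (r k / Q (k + 1)) := by
              rw [div_div_eq_mul_div]; ring
      have h2 : r k / Q (k + 1) ≤ Real.log (Q (k + 1)) - Real.log (Q k) := by
        have hlog := Real.log_le_sub_one_of_pos (div_pos hQkpos hQk1pos)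
        rw [Real.log_div hQkpos.ne' hQk1pos.ne'] at hlog
        have heq : Q k / Q (k + 1) - 1 = -(r k / Q (k + 1)) := by
          field_simp
          rw [hQsucc]; ring
        linarith [heq ▸ hlog]
      rw [huk, hRk, hRk1]
      linarith [mul_le_mul_of_nonneg_left h2 (by norm_num : (0:ℝ) ≤ 4)]
    · have huk : u k = 0 := by simp only [hudef]; rw [if_neg (by tauto)]
      rw [huk]
      have := Real.log_le_log (hRpos k) hRmono
      linarith
  have husum : ∑ k ∈ Finset.range K, u k ≤ 4 * Real.log (4 + K) := by
    calc ∑ k ∈ Finset.range K, u k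
        ≤ ∑ k ∈ Finset.range K, 4 * (Real.log (R (k + 1)) - Real.log (R k)) :=
          Finset.sum_le_sum hterm
      _ = 4 * (Real.log (R K) - Real.log (R 0)) := by
          rw [← Finset.mul_sum, Finset.sum_range_sub (fun k => Real.log (R k))]
      _ ≤ 4 * Real.log (4 + K) := by
          have hR0 : R 0 = 4 := by
            simp only [hRdef, hQ0]; exact max_eq_right (by norm_num)
          have hRK : R K ≤ 4 + K :=
            max_le (by linarith [hQK, Nat.cast_nonneg (α := ℝ) K])
              (by linarith [Nat.cast_nonneg (α := ℝ) K])
          have hlog4 : (0 : ℝ) ≤ Real.log 4 := Real.log_nonneg (by norm_num)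
          have h := Real.log_le_log (hRpos K) hRK
          rw [hR0]; linarith
  have hgood : (∑ k ∈ Finset.range K, if 4 * W + 4 < Q k then r k / Real.sqrt (m k) else 0)
      ≤ Real.sqrt (Q K) * Real.sqrt (4 * Real.log (4 + K)) := by
    calc (∑ k ∈ Finset.range K, if 4 * W + 4 < Q k then r k / Real.sqrt (m k) else 0)
        = ∑ k ∈ Finset.range K, Real.sqrt (g k) * Real.sqrt (u k) :=
          Finset.sum_congr rfl hgood_eq
      _ ≤ Real.sqrt (∑ k ∈ Finset.range K, g k) * Real.sqrt (∑ k ∈ Finset.range K, u k) :=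
          cs_aux _ _ _ (fun i _ => hg0 i) (fun i _ => hu0 i)
      _ ≤ Real.sqrt (Q K) * Real.sqrt (4 * Real.log (4 + K)) :=
          mul_le_mul (Real.sqrt_le_sqrt hgsum) (Real.sqrt_le_sqrt husum)
            (Real.sqrt_nonneg _) (Real.sqrt_nonneg _)
  rw [hsplit]
  exact add_le_add hgood hbad

/-- Occupancy-over-square-root-count bound: if each `q(k,h,·,·)` is a probability
distribution over state–action pairs and the visit counts satisfy
`n(k,h,s,a) > (1/2)·∑_{j<k} q(j,h,s,a) − W`, then
`∑_k ∑_h ∑_{s,a} q(k,h,s,a)/√(max{n(k,h,s,a),1}) ≤ 2H·√(S·A·K·ln(4+K)) + S·A·H·(4W+5)`. -/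
theorem stmt_15 (S A : Type*) [Fintype S] [Nonempty S] [Fintype A] [Nonempty A]
    (K H : ℕ) (hK : 0 < K) (hH : 0 < H) (W : ℝ) (hW : 0 ≤ W)
    (q n : ℕ → ℕ → S → A → ℝ)
    (hq : ∀ k < K, ∀ h < H, ∀ s a, 0 ≤ q k h s a ∧ q k h s a ≤ 1)
    (hsum : ∀ k < K, ∀ h < H, ∑ s : S, ∑ a : A, q k h s a = 1)
    (hn : ∀ k < K, ∀ h < H, ∀ s a,
      n k h s a > (1 / 2 : ℝ) * (∑ j ∈ Finset.range k, q j h s a) - W) :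
    ∑ k ∈ Finset.range K, ∑ h ∈ Finset.range H, ∑ s : S, ∑ a : A,
      q k h s a / Real.sqrt (max (n k h s a) 1) ≤
      2 * (H : ℝ) *
        Real.sqrt ((Fintype.card S : ℝ) * (Fintype.card A : ℝ) * (K : ℝ) *
          Real.log (4 + K)) +
      (Fintype.card S : ℝ) * (Fintype.card A : ℝ) * (H : ℝ) * (4 * W + 5) := by
  classical
  set cS : ℝ := (Fintype.card S : ℝ) with hcS
  set cA : ℝ := (Fintype.card A : ℝ) with hcA
  have hcS0 : (0 : ℝ) ≤ cS := Nat.cast_nonneg _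
  have hcA0 : (0 : ℝ) ≤ cA := Nat.cast_nonneg _
  set L : ℝ := Real.log (4 + K) with hL
  have hL0 : (0 : ℝ) ≤ L := Real.log_nonneg (by
    have : (0:ℝ) ≤ (K:ℝ) := Nat.cast_nonneg _
    linarith)
  have hper : ∀ h ∈ Finset.range H,
      (∑ k ∈ Finset.range K, ∑ s : S, ∑ a : A,
        q k h s a / Real.sqrt (max (n k h s a) 1))
      ≤ 2 * Real.sqrt (cS * cA * K * L) + cS * cA * (4 * W + 5) := by
    intro h hh
    have hhH := Finset.mem_range.mp hh
    have hswap : (∑ k ∈ Finset.range K, ∑ s : S, ∑ a : A,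
          q k h s a / Real.sqrt (max (n k h s a) 1))
        = ∑ s : S, ∑ a : A, ∑ k ∈ Finset.range K,
          q k h s a / Real.sqrt (max (n k h s a) 1) := by
      rw [Finset.sum_comm]
      exact Finset.sum_congr rfl fun s _ => Finset.sum_comm
    have hQsa0 : ∀ (s : S) (a : A), (0:ℝ) ≤ ∑ j ∈ Finset.range K, q j h s a :=
      fun s a => Finset.sum_nonneg fun j hj =>
        (hq j (Finset.mem_range.mp hj) h hhH s a).1
    have hQtot : ∑ s : S, ∑ a : A, ∑ j ∈ Finset.range K, q j h s a = K := by
      calc ∑ s : S, ∑ a : A, ∑ j ∈ Finset.range K, q j h s a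
          = ∑ s : S, ∑ j ∈ Finset.range K, ∑ a : A, q j h s a :=
            Finset.sum_congr rfl fun s _ => Finset.sum_comm
        _ = ∑ j ∈ Finset.range K, ∑ s : S, ∑ a : A, q j h s a := Finset.sum_comm
        _ = ∑ _j ∈ Finset.range K, (1:ℝ) := Finset.sum_congr rfl fun j hj =>
            hsum j (Finset.mem_range.mp hj) h hhH
        _ = K := by simp
    have hsa : ∀ (s : S) (a : A),
        (∑ k ∈ Finset.range K, q k h s a / Real.sqrt (max (n k h s a) 1))
        ≤ Real.sqrt (∑ j ∈ Finset.range K, q j h s a) * Real.sqrt (4 * L) +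
          (4 * W + 5) := by
      intro s a
      exact aux_seq K W hW (fun k => q k h s a) (fun k => max (n k h s a) 1)
        (fun k hk => (hq k hk h hhH s a).1) (fun k hk => (hq k hk h hhH s a).2)
        (fun k => le_max_right _ _)
        (fun k hk => lt_of_lt_of_le (hn k hk h hhH s a) (le_max_left _ _))
    have hsqrtsum : (∑ s : S, ∑ a : A, Real.sqrt (∑ j ∈ Finset.range K, q j h s a))
        ≤ Real.sqrt cS * Real.sqrt cA * Real.sqrt K := by
      calc ∑ s : S, ∑ a : A, Real.sqrt (∑ j ∈ Finset.range K, q j h s a)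
          ≤ ∑ s : S, Real.sqrt cA * Real.sqrt (∑ a : A, ∑ j ∈ Finset.range K, q j h s a) :=
            Finset.sum_le_sum fun s _ => cs_one _ (fun a => hQsa0 s a)
        _ = Real.sqrt cA * ∑ s : S, Real.sqrt (∑ a : A, ∑ j ∈ Finset.range K, q j h s a) :=
            (Finset.mul_sum _ _ _).symm
        _ ≤ Real.sqrt cA * (Real.sqrt cS *
              Real.sqrt (∑ s : S, ∑ a : A, ∑ j ∈ Finset.range K, q j h s a)) := by
            apply mul_le_mul_of_nonneg_left _ (Real.sqrt_nonneg _)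
            exact cs_one _ (fun s => Finset.sum_nonneg fun a _ => hQsa0 s a)
        _ = Real.sqrt cS * Real.sqrt cA * Real.sqrt K := by rw [hQtot]; ring
    calc (∑ k ∈ Finset.range K, ∑ s : S, ∑ a : A,
            q k h s a / Real.sqrt (max (n k h s a) 1))
        = ∑ s : S, ∑ a : A, ∑ k ∈ Finset.range K,
            q k h s a / Real.sqrt (max (n k h s a) 1) := hswap
      _ ≤ ∑ s : S, ∑ a : A,
            (Real.sqrt (∑ j ∈ Finset.range K, q j h s a) * Real.sqrt (4 * L) +
              (4 * W + 5)) :=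
          Finset.sum_le_sum fun s _ => Finset.sum_le_sum fun a _ => hsa s a
      _ = (∑ s : S, ∑ a : A, Real.sqrt (∑ j ∈ Finset.range K, q j h s a)) *
            Real.sqrt (4 * L) + cS * cA * (4 * W + 5) := by
          simp only [Finset.sum_add_distrib, Finset.sum_const, Finset.card_univ,
            nsmul_eq_mul, ← Finset.sum_mul, hcS, hcA]
          push_cast
          ring
      _ ≤ (Real.sqrt cS * Real.sqrt cA * Real.sqrt K) * Real.sqrt (4 * L) +
            cS * cA * (4 * W + 5) := by
          have := mul_le_mul_of_nonneg_right hsqrtsum (Real.sqrt_nonneg (4 * L))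
          linarith
      _ = 2 * Real.sqrt (cS * cA * K * L) + cS * cA * (4 * W + 5) := by
          have h4 : Real.sqrt (4 * L) = 2 * Real.sqrt L := by
            rw [Real.sqrt_mul (by norm_num : (0:ℝ) ≤ 4),
              show (4:ℝ) = 2 ^ 2 by norm_num, Real.sqrt_sq (by norm_num : (0:ℝ) ≤ 2)]
          have h5 : Real.sqrt (cS * cA * (K:ℝ) * L) =
              Real.sqrt cS * Real.sqrt cA * Real.sqrt (K:ℝ) * Real.sqrt L := by
            rw [Real.sqrt_mul (by positivity), Real.sqrt_mul (by positivity),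
              Real.sqrt_mul hcS0]
          rw [h4, h5]; ring
  calc ∑ k ∈ Finset.range K, ∑ h ∈ Finset.range H, ∑ s : S, ∑ a : A,
        q k h s a / Real.sqrt (max (n k h s a) 1)
      = ∑ h ∈ Finset.range H, ∑ k ∈ Finset.range K, ∑ s : S, ∑ a : A,
        q k h s a / Real.sqrt (max (n k h s a) 1) := Finset.sum_comm
    _ ≤ ∑ _h ∈ Finset.range H,
        (2 * Real.sqrt (cS * cA * K * L) + cS * cA * (4 * W + 5)) :=
        Finset.sum_le_sum hper
    _ = (H : ℝ) * (2 * Real.sqrt (cS * cA * K * L) + cS * cA * (4 * W + 5)) := by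
        simp [Finset.sum_const, Finset.card_range, nsmul_eq_mul]; ring
    _ = 2 * (H : ℝ) * Real.sqrt (cS * cA * (K : ℝ) * L) + cS * cA * (H : ℝ) * (4 * W + 5) := by
        ring
end

section
/- Let S, A be nonempty finite sets, let K, H be positive integers, and let W ≥ 0 be a real number. Let q : {1,...,K} × {1,...,H} × S × A → [0,1] and n : {1,...,K} × {1,...,H} × S × A → ℝ satisfy, for all k, h, s, a: n(k,h,s,a) > (1/2) · ∑_{j=1}^{k−1} q(j,h,s,a) − W. Then ∑_{k=1}^{K} ∑_{h=1}^{H} ∑_{(s,a)} q(k,h,s,a) / max{n(k,h,s,a), 1} ≤ |S| · |A| · H · (4 · ln(4 + K) + 4W + 5). -/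
open Finset

lemma log_lb_aux {t : ℝ} (h0 : 0 ≤ t) (h1 : t ≤ 1/2) : (2/3)*t ≤ Real.log (1+t) := by
  have hpos : (0:ℝ) < 1 + t := by linarith
  have h := Real.log_le_sub_one_of_pos (show (0:ℝ) < 1/(1+t) by positivity)
  rw [Real.log_div one_ne_zero (ne_of_gt hpos), Real.log_one] at h
  have h2 : 1 - 1/(1+t) ≤ Real.log (1+t) := by linarith
  have h3 : 1 - 1/(1+t) = t/(1+t) := by field_simp; ring
  rw [h3] at h2
  have h4 : (2/3)*t ≤ t/(1+t) := by
    rw [le_div_iff₀ hpos]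
    nlinarith
  linarith

lemma aux_bound (K : ℕ) (W : ℝ) (hW : 0 ≤ W) (f N : ℕ → ℝ)
    (hf : ∀ k < K, 0 ≤ f k ∧ f k ≤ 1)
    (hN : ∀ k < K, N k > (1/2 : ℝ)*(∑ j ∈ range k, f j) - W) :
    ∑ k ∈ range K, f k / max (N k) 1 ≤ 4 * Real.log (4+K) + 4*W + 5 := by
  set Q : ℕ → ℝ := fun m => ∑ j ∈ range m, f j with hQdef
  set D : ℕ → ℝ := fun m => max (Q m - 2*W) 2 with hDdef
  set g : ℕ → ℝ := fun k => if Q k ≤ 2+2*W then f k else 0 with hgdef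
  have hQstep : ∀ k, Q (k+1) = Q k + f k := fun k => Finset.sum_range_succ f k
  have hfnn : ∀ k < K, 0 ≤ f k := fun k hk => (hf k hk).1
  have hD2 : ∀ m, (2:ℝ) ≤ D m := fun m => le_max_right _ _
  have hDpos : ∀ m, (0:ℝ) < D m := fun m => lt_of_lt_of_le two_pos (hD2 m)
  have hDmono : ∀ k < K, D k ≤ D (k+1) := by
    intro k hk
    exact max_le_max (by rw [hQstep k]; linarith [hfnn k hk]) le_rfl
  have key : ∀ k ∈ range K, f k / max (N k) 1 ≤
      g k + 3*(Real.log (D (k+1)) - Real.log (D k)) := by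
    intro k hk'
    have hk : k < K := mem_range.1 hk'
    have hfk := hf k hk
    have hlog : 0 ≤ Real.log (D (k+1)) - Real.log (D k) :=
      sub_nonneg.2 (Real.log_le_log (hDpos k) (hDmono k hk))
    by_cases hc : Q k ≤ 2+2*W
    · have hg1 : g k = f k := if_pos hc
      have : f k / max (N k) 1 ≤ f k := div_le_self hfk.1 (le_max_right _ _)
      rw [hg1]; linarith
    · have hg0 : g k = 0 := if_neg hc
      push_neg at hc
      have hDk : D k = Q k - 2*W := max_eq_left (by linarith)
      have hDk1 : D (k+1) = D k + f k := by
        have h2 : (2:ℝ) ≤ Q (k+1) - 2*W := by rw [hQstep k]; nlinarith [hfnn k hk]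
        have h3 : D (k+1) = Q (k+1) - 2*W := max_eq_left h2
        rw [h3, hQstep k, hDk]; ring
      -- denominator bound
      have hden : D k / 2 ≤ max (N k) 1 := by
        have := hN k hk
        have : D k / 2 ≤ N k := by rw [hDk]; linarith
        exact le_trans this (le_max_left _ _)
      have hdenpos : (0:ℝ) < D k / 2 := by linarith [hDpos k]
      have h1 : f k / max (N k) 1 ≤ f k / (D k / 2) :=
        div_le_div_of_nonneg_left hfk.1 hdenpos hden
      have h2 : f k / (D k / 2) = 2 * (f k / D k) := by
        field_simp
      set t := f k / D k with htdef
      have ht0 : 0 ≤ t := div_nonneg hfk.1 (le_of_lt (hDpos k))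
      have ht1 : t ≤ 1/2 := by
        rw [htdef, div_le_div_iff₀ (hDpos k) (by norm_num)]
        nlinarith [hD2 k, hfk.2]
      have hlogratio : Real.log (D (k+1)) - Real.log (D k) = Real.log (1 + t) := by
        rw [hDk1, ← Real.log_div (ne_of_gt (by linarith [hDpos k, hfk.1])) (ne_of_gt (hDpos k))]
        congr 1
        rw [htdef]
        rw [add_div, div_self (ne_of_gt (hDpos k))]
      have := log_lb_aux ht0 ht1
      rw [hg0, hlogratio]
      linarith
  have hsum := Finset.sum_le_sum key
  rw [Finset.sum_add_distrib, ← Finset.mul_sum, Finset.sum_range_sub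
    (fun m => Real.log (D m))] at hsum
  -- bound on sum of g
  have hg_bound : ∀ m, m ≤ K → (∑ k ∈ range m, g k) ≤ Q m ∧ (∑ k ∈ range m, g k) ≤ 2+2*W+1 := by
    intro m
    induction m with
    | zero =>
      intro _
      simp only [Finset.sum_range_zero]
      constructor
      · simp [hQdef]
      · linarith
    | succ m ih =>
      intro hm
      have hmlt : m < K := Nat.lt_of_succ_le hm
      obtain ⟨h1, h2⟩ := ih (le_of_lt hmlt)
      rw [Finset.sum_range_succ]
      by_cases hc : Q m ≤ 2+2*W
      · have hg1 : g m = f m := if_pos hc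
        rw [hg1]
        constructor
        · rw [hQstep m]; linarith
        · linarith [(hf m hmlt).2]
      · have hg0 : g m = 0 := if_neg hc
        rw [hg0]
        constructor
        · have : Q m ≤ Q (m+1) := by rw [hQstep m]; linarith [hfnn m hmlt]
          linarith
        · linarith
  have hgK := (hg_bound K le_rfl).2
  -- final log bounds
  have hQK : Q K ≤ K := by
    calc Q K ≤ ∑ _j ∈ range K, (1:ℝ) := Finset.sum_le_sum (fun j hj => (hf j (mem_range.1 hj)).2)
    _ = K := by simp
  have hDK : D K ≤ 4 + K := by
    apply max_le
    · linarith
    · have : (0:ℝ) ≤ (K:ℝ) := Nat.cast_nonneg K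
      linarith
  have hlogDK : Real.log (D K) ≤ Real.log (4 + K) := Real.log_le_log (hDpos K) hDK
  have hlogD0 : 0 ≤ Real.log (D 0) := Real.log_nonneg (by linarith [hD2 0])
  have hlog4K : 0 ≤ Real.log (4 + (K:ℝ)) := Real.log_nonneg (by
    have : (0:ℝ) ≤ (K:ℝ) := Nat.cast_nonneg K
    linarith)
  linarith

/-- Occupancy-over-count bound: if the visit counts satisfy
`n(k,h,s,a) > (1/2)·∑_{j<k} q(j,h,s,a) − W`, then
`∑_k ∑_h ∑_{s,a} q(k,h,s,a)/max{n(k,h,s,a),1} ≤ S·A·H·(4·ln(4+K) + 4W + 5)`. -/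
theorem stmt_16 (S A : Type*) [Fintype S] [Nonempty S] [Fintype A] [Nonempty A]
    (K H : ℕ) (hK : 0 < K) (hH : 0 < H) (W : ℝ) (hW : 0 ≤ W)
    (q n : ℕ → ℕ → S → A → ℝ)
    (hq : ∀ k < K, ∀ h < H, ∀ s a, 0 ≤ q k h s a ∧ q k h s a ≤ 1)
    (hn : ∀ k < K, ∀ h < H, ∀ s a,
      n k h s a > (1 / 2 : ℝ) * (∑ j ∈ Finset.range k, q j h s a) - W) :
    ∑ k ∈ Finset.range K, ∑ h ∈ Finset.range H, ∑ s : S, ∑ a : A,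
      q k h s a / max (n k h s a) 1 ≤
      (Fintype.card S : ℝ) * (Fintype.card A : ℝ) * (H : ℝ) *
        (4 * Real.log (4 + K) + 4 * W + 5) := by
  have hswap : ∑ k ∈ Finset.range K, ∑ h ∈ Finset.range H, ∑ s : S, ∑ a : A,
      q k h s a / max (n k h s a) 1 =
      ∑ h ∈ Finset.range H, ∑ s : S, ∑ a : A, ∑ k ∈ Finset.range K,
      q k h s a / max (n k h s a) 1 := by
    rw [Finset.sum_comm]
    refine Finset.sum_congr rfl fun h _ => ?_
    rw [Finset.sum_comm]
    refine Finset.sum_congr rfl fun s _ => ?_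
    rw [Finset.sum_comm]
  rw [hswap]
  set B : ℝ := 4 * Real.log (4 + K) + 4 * W + 5 with hB
  have hinner : ∀ h ∈ Finset.range H, ∀ s : S, ∀ a : A,
      ∑ k ∈ Finset.range K, q k h s a / max (n k h s a) 1 ≤ B := by
    intro h hh s a
    have hh' := Finset.mem_range.1 hh
    exact aux_bound K W hW (fun k => q k h s a) (fun k => n k h s a)
      (fun k hk => hq k hk h hh' s a) (fun k hk => hn k hk h hh' s a)
  calc ∑ h ∈ Finset.range H, ∑ s : S, ∑ a : A, ∑ k ∈ Finset.range K,
      q k h s a / max (n k h s a) 1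
      ≤ ∑ _h ∈ Finset.range H, ∑ _s : S, ∑ _a : A, B := by
        refine Finset.sum_le_sum fun h hh => ?_
        refine Finset.sum_le_sum fun s _ => ?_
        exact Finset.sum_le_sum fun a _ => hinner h hh s a
    _ = (H : ℝ) * ((Fintype.card S : ℝ) * ((Fintype.card A : ℝ) * B)) := by
        simp [Finset.sum_const, Finset.card_univ, mul_assoc]
    _ = (Fintype.card S : ℝ) * (Fintype.card A : ℝ) * (H : ℝ) * B := by ring
end
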